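/- Let d, e be positive integers and a, b, r, s integers with gcd(d,a,b) = gcd(e,r,s) = 1. The number of solutions (i,j) ∈ (ℤ/gcd(d,e))² of the system a·i + r·j ≡ 0 and b·i + s·j ≡ 0 (mod gcd(d,e)) equals gcd(d, e, a·s − b·r). -/

import Mathlib

theorem aux_order (n : ℕ) (hn : n ≠ 0) (c : ℤ) : addOrderOf ((c : ZMod n)) = n / Int.gcd n c := by
  have hg : Int.gcd (n:ℤ) c = Nat.gcd n c.natAbs := by simp [Int.gcd]
  rcases Int.natAbs_eq c with h | h
  · rw [hg, h, Int.cast_natCast, ZMod.addOrderOf_coe _ hn]; simp [Int.natAbs_abs]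
  · rw [hg, h, Int.cast_neg, Int.cast_natCast, addOrderOf_neg, ZMod.addOrderOf_coe _ hn]
    simp [Int.natAbs_abs]

theorem aux_card (n : ℕ) (hn : n ≠ 0) (c : ℤ) :
    Nat.card {j : ZMod n // (c : ZMod n) * j = 0} = Int.gcd n c := by
  haveI : NeZero n := ⟨hn⟩
  set f : ZMod n →+ ZMod n := AddMonoidHom.mulLeft (c : ZMod n) with hf
  have hker : Nat.card {j : ZMod n // (c : ZMod n) * j = 0} = Nat.card f.ker := rfl
  have hrange : f.range = AddSubgroup.zmultiples ((c : ZMod n)) := by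
    ext x
    constructor
    · rintro ⟨j, rfl⟩
      refine ⟨(j.val : ℤ), ?_⟩
      simp [f, AddMonoidHom.mulLeft, zsmul_eq_mul, ZMod.natCast_val, ZMod.cast_id, mul_comm]
    · rintro ⟨k, rfl⟩
      exact ⟨(k : ZMod n), by simp [f, AddMonoidHom.mulLeft, zsmul_eq_mul, mul_comm]⟩
  have h2 := Nat.card_congr (QuotientAddGroup.quotientKerEquivRange f).toEquiv
  have h1 : Nat.card f.range * Nat.card f.ker = n := by
    rw [← h2, ← AddSubgroup.card_eq_card_quotient_mul_card_addSubgroup f.ker, Nat.card_zmod]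
  have hr : Nat.card f.range = n / Int.gcd n c := by
    rw [hrange, Nat.card_zmultiples, aux_order n hn c]
  have hgdvd : Int.gcd n c ∣ n :=
    Int.ofNat_dvd.mp (Int.gcd_dvd_left (a := (n:ℤ)) (b := c))
  have hgpos : 0 < Int.gcd n c := Nat.pos_of_ne_zero (by
    intro h0
    exact hn (by simpa using Nat.eq_zero_of_gcd_eq_zero_left (n := c.natAbs) (by simpa [Int.gcd] using h0)))
  rw [hker]
  rw [hr] at h1
  -- n / g * ker = n, so ker = g
  have : Int.gcd n c * (n / Int.gcd n c * Nat.card f.ker) = Int.gcd n c * n := by rw [h1]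
  rw [← mul_assoc, Nat.mul_div_cancel' hgdvd] at this
  exact Nat.eq_of_mul_eq_mul_left (Nat.pos_of_ne_zero hn) (by linarith [this])

/-- The number of solutions `(i,j) ∈ (ℤ/gcd(d,e))²` of the system
`a·i + r·j ≡ 0`, `b·i + s·j ≡ 0 (mod gcd(d,e))` equals `gcd(d, e, a·s − b·r)`,
provided `gcd(d,a,b) = gcd(e,r,s) = 1`. -/
theorem card_solutions_congruence_system (d e : ℕ) (hd : 0 < d) (he : 0 < e)
    (a b r s : ℤ)
    (hdab : Int.gcd (Int.gcd (d : ℤ) a) b = 1)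
    (hers : Int.gcd (Int.gcd (e : ℤ) r) s = 1) :
    Nat.card {ij : ZMod (Nat.gcd d e) × ZMod (Nat.gcd d e) //
      (a : ZMod (Nat.gcd d e)) * ij.1 + (r : ZMod (Nat.gcd d e)) * ij.2 = 0 ∧
      (b : ZMod (Nat.gcd d e)) * ij.1 + (s : ZMod (Nat.gcd d e)) * ij.2 = 0} =
    Int.gcd (Int.gcd (d : ℤ) (e : ℤ)) (a * s - b * r) := by
  set n := Nat.gcd d e with hn'
  have hn : n ≠ 0 := Nat.gcd_ne_zero_left hd.ne'
  -- gcd(n, a, b) = 1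
  have hnab : Nat.gcd (Nat.gcd n a.natAbs) b.natAbs = 1 := by
    have h1 : Nat.gcd n a.natAbs ∣ Nat.gcd d a.natAbs :=
      Nat.gcd_dvd_gcd_of_dvd_left _ (Nat.gcd_dvd_left d e)
    have h2 : Nat.gcd (Nat.gcd n a.natAbs) b.natAbs ∣ Nat.gcd (Nat.gcd d a.natAbs) b.natAbs :=
      Nat.gcd_dvd_gcd_of_dvd_left _ h1
    have h3 : Nat.gcd (Nat.gcd d a.natAbs) b.natAbs = 1 := by
      simpa [Int.gcd] using hdab
    exact Nat.eq_one_of_dvd_one (h3 ▸ h2)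
  have hnab' : Int.gcd (Int.gcd (n : ℤ) a) b = 1 := by simpa [Int.gcd] using hnab
  -- Bezout: get U V in ZMod n with a*U + b*V = 1
  obtain ⟨U, V, hUV⟩ : ∃ U V : ZMod n, (a : ZMod n) * U + (b : ZMod n) * V = 1 := by
    set g : ℕ := Int.gcd (n : ℤ) a with hg
    have hb1 := Int.gcd_eq_gcd_ab ((g : ℤ)) b
    have hb2 := Int.gcd_eq_gcd_ab (n : ℤ) a
    rw [hnab'] at hb1
    have t2 : ((g : ℕ) : ZMod n) = (a : ZMod n) * ((Int.gcdB (n:ℤ) a : ℤ) : ZMod n) := by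
      have := congrArg (Int.cast : ℤ → ZMod n) hb2
      push_cast at this
      rw [ZMod.natCast_self] at this
      push_cast
      linear_combination this
    have t1 := congrArg (Int.cast : ℤ → ZMod n) hb1
    push_cast at t1
    rw [t2] at t1
    exact ⟨((Int.gcdB (n:ℤ) a : ℤ) : ZMod n) * ((Int.gcdA (g:ℤ) b : ℤ) : ZMod n),
      ((Int.gcdB (g:ℤ) b : ℤ) : ZMod n), by linear_combination -t1⟩
  -- equivalence with kernel of multiplication by (a*s - b*r)
  have hEquiv : {ij : ZMod n × ZMod n //
      (a : ZMod n) * ij.1 + (r : ZMod n) * ij.2 = 0 ∧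
      (b : ZMod n) * ij.1 + (s : ZMod n) * ij.2 = 0} ≃
      {j : ZMod n // ((a * s - b * r : ℤ) : ZMod n) * j = 0} := by
    refine ⟨fun x => ⟨x.1.2, ?_⟩, fun y => ⟨(-((U * r + V * s) * y.1), y.1), ?_, ?_⟩, ?_, ?_⟩
    · obtain ⟨⟨i, j⟩, h1, h2⟩ := x
      push_cast
      linear_combination a * h2 - b * h1
    · obtain ⟨j, hj⟩ := y
      push_cast at hj ⊢
      linear_combination (-(r * j)) * hUV - V * hj
    · obtain ⟨j, hj⟩ := y
      push_cast at hj ⊢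
      linear_combination (-(s * j)) * hUV + U * hj
    · rintro ⟨⟨i, j⟩, h1, h2⟩
      ext
      · show -((U * r + V * s) * j) = i
        linear_combination i * hUV - U * h1 - V * h2
      · rfl
    · rintro ⟨j, hj⟩; rfl
  rw [Nat.card_congr hEquiv, aux_card n hn (a * s - b * r)]
  rw [Int.gcd_natCast_natCast]
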